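/- For 0 < α < 1, every integer m ≥ 1, and all n ≥ 1, (Γ(2-α) / Γ(1+(m-1)α)) · Σ_{j=1}^{n-1} p_{n-j} j^{(m-1)α} ≤ n^{mα} / Γ(1+mα). -/

import Mathlib

open Real Finset
open MeasureTheory intervalIntegral Set

lemma beta_intble {s t : ℝ} (hs : 0 < s) (ht : 0 < t) {x : ℝ} (hx : 0 < x) :
    IntervalIntegrable (fun u => u ^ (s - 1) * (x - u) ^ (t - 1)) volume 0 x := by
  have A : IntervalIntegrable (fun u => u ^ (s - 1) * (x - u) ^ (t - 1)) volume 0 (x / 2) := by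
    apply (intervalIntegral.intervalIntegrable_rpow' (by linarith)).mul_continuousOn
    apply ContinuousOn.rpow_const (by fun_prop)
    intro u hu
    rw [Set.uIcc_of_le (by linarith)] at hu
    left
    have := hu.2
    intro h; nlinarith [hu.1, hu.2]
  have B : IntervalIntegrable (fun u => u ^ (s - 1) * (x - u) ^ (t - 1)) volume (x / 2) x := by
    have base : IntervalIntegrable (fun v : ℝ => v ^ (t - 1)) volume 0 (x / 2) :=
      intervalIntegral.intervalIntegrable_rpow' (by linarith)
    have comp := base.comp_sub_left x
    have comp' : IntervalIntegrable (fun u : ℝ => (x - u) ^ (t - 1)) volume (x / 2) x := by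
      have : x - x / 2 = x / 2 := by ring
      simpa [this] using comp.symm
    apply comp'.continuousOn_mul
    apply ContinuousOn.rpow_const (by fun_prop)
    intro u hu
    rw [Set.uIcc_of_le (by linarith)] at hu
    left
    intro h; nlinarith [hu.1, hu.2]
  exact A.trans B

lemma beta_eval {s t : ℝ} (hs : 0 < s) (ht : 0 < t) {x : ℝ} (hx : 0 < x) :
    ∫ u in (0:ℝ)..x, u ^ (s - 1) * (x - u) ^ (t - 1) =
      Real.Gamma s * Real.Gamma t / Real.Gamma (s + t) * x ^ (s + t - 1) := by
  have h1 : (((∫ u in (0:ℝ)..x, u ^ (s - 1) * (x - u) ^ (t - 1)) : ℝ) : ℂ) =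
      ∫ u in (0:ℝ)..x, (((u ^ (s - 1) * (x - u) ^ (t - 1) : ℝ)) : ℂ) :=
    (intervalIntegral.integral_ofReal).symm
  have h2 : (∫ u in (0:ℝ)..x, (((u ^ (s - 1) * (x - u) ^ (t - 1) : ℝ)) : ℂ)) =
      ∫ u in (0:ℝ)..x, (u : ℂ) ^ ((s : ℂ) - 1) * ((x : ℂ) - (u : ℂ)) ^ ((t : ℂ) - 1) := by
    apply intervalIntegral.integral_congr
    intro u hu
    rw [Set.uIcc_of_le hx.le] at hu
    have hu0 : 0 ≤ u := hu.1
    have hux : 0 ≤ x - u := by linarith [hu.2]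
    push_cast
    rw [Complex.ofReal_cpow hu0, Complex.ofReal_cpow hux]
    push_cast
    ring
  have h3 := Complex.betaIntegral_scaled (s : ℂ) (t : ℂ) hx
  have h4 : Complex.Gamma s * Complex.Gamma t =
      Complex.Gamma ((s : ℂ) + t) * Complex.betaIntegral s t :=
    Complex.Gamma_mul_Gamma_eq_betaIntegral (by simpa using hs) (by simpa using ht)
  have hΓ : Complex.Gamma ((s : ℂ) + t) ≠ 0 := by
    have : ((s : ℂ) + t) = ((s + t : ℝ) : ℂ) := by push_cast; ring
    rw [this, Complex.Gamma_ofReal]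
    exact_mod_cast (Real.Gamma_pos_of_pos (by linarith)).ne'
  have hbeta : Complex.betaIntegral s t =
      Complex.Gamma s * Complex.Gamma t / Complex.Gamma ((s : ℂ) + t) := by
    rw [eq_div_iff hΓ]
    linear_combination -h4
  have key : (((∫ u in (0:ℝ)..x, u ^ (s - 1) * (x - u) ^ (t - 1)) : ℝ) : ℂ) =
      ((Real.Gamma s * Real.Gamma t / Real.Gamma (s + t) * x ^ (s + t - 1) : ℝ) : ℂ) := by
    rw [h1, h2, h3, hbeta]
    have hx' : ((x : ℂ) ^ ((s : ℂ) + t - 1)) = ((x ^ (s + t - 1) : ℝ) : ℂ) := by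
      rw [Complex.ofReal_cpow hx.le]
      push_cast; ring_nf
    rw [hx']
    have : ((s : ℂ) + t) = ((s + t : ℝ) : ℂ) := by push_cast; ring
    simp only [this, Complex.Gamma_ofReal]
    push_cast
    ring
  exact_mod_cast key

lemma cheby {c : ℝ} {F G : ℝ → ℝ}
    (hF : IntegrableOn F (Set.Ioo c (c + 1)))
    (hG : IntegrableOn G (Set.Ioo c (c + 1)))
    (hFG : IntegrableOn (fun u => F u * G u) (Set.Ioo c (c + 1)))
    (hop : ∀ x ∈ Set.Ioo c (c + 1), ∀ y ∈ Set.Ioo c (c + 1), (F x - F y) * (G x - G y) ≤ 0) :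
    ∫ u in Set.Ioo c (c + 1), F u * G u ≤
      (∫ u in Set.Ioo c (c + 1), F u) * ∫ u in Set.Ioo c (c + 1), G u := by
  set μ := volume.restrict (Set.Ioo c (c + 1)) with hμ
  haveI : IsProbabilityMeasure μ := by
    constructor
    rw [hμ, Measure.restrict_apply_univ, Real.volume_Ioo]
    norm_num
  set IF := ∫ u, F u ∂μ with hIF
  set IG := ∫ u, G u ∂μ with hIG
  set IFG := ∫ u, F u * G u ∂μ with hIFG
  have inner_eq : ∀ x : ℝ, (∫ y, (F x - F y) * (G x - G y) ∂μ) =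
      F x * G x - F x * IG - G x * IF + IFG := by
    intro x
    have hrw : (fun y => (F x - F y) * (G x - G y)) =
        fun y => ((F x * G x - F x * G y) - G x * F y) + F y * G y := by
      funext y; ring
    have i0 : Integrable (fun y => F x * G x - F x * G y) μ :=
      (integrable_const _).sub (hG.const_mul _)
    have i1 : Integrable (fun y => F x * G x - F x * G y - G x * F y) μ :=
      i0.sub (hF.const_mul _)
    rw [hrw, MeasureTheory.integral_add i1 hFG,
      MeasureTheory.integral_sub i0 (hF.const_mul _),
      MeasureTheory.integral_sub (integrable_const _) (hG.const_mul _),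
      MeasureTheory.integral_const, MeasureTheory.integral_const_mul,
      MeasureTheory.integral_const_mul]
    simp [hIF, hIG, hIFG]
    left; rfl
    try ring
  have h2 : (∫ x, (F x * G x - F x * IG - G x * IF + IFG) ∂μ) = 2 * IFG - 2 * (IF * IG) := by
    have i0 : Integrable (fun x => F x * G x - F x * IG) μ := hFG.sub (hF.mul_const _)
    have i1 : Integrable (fun x => F x * G x - F x * IG - G x * IF) μ := i0.sub (hG.mul_const _)
    rw [MeasureTheory.integral_add i1 (integrable_const _),
      MeasureTheory.integral_sub i0 (hG.mul_const _),
      MeasureTheory.integral_sub hFG (hF.mul_const _),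
      MeasureTheory.integral_const, MeasureTheory.integral_mul_const,
      MeasureTheory.integral_mul_const]
    simp [hIF, hIG, hIFG]
    try ring
  have h1 : (∫ x, (F x * G x - F x * IG - G x * IF + IFG) ∂μ) ≤ 0 := by
    apply MeasureTheory.integral_nonpos_of_ae
    filter_upwards [MeasureTheory.ae_restrict_mem measurableSet_Ioo] with x hx
    rw [← inner_eq x]
    apply MeasureTheory.integral_nonpos_of_ae
    filter_upwards [MeasureTheory.ae_restrict_mem measurableSet_Ioo] with y hy
    exact hop x hx y hy
  have := h2 ▸ h1
  have goal : IFG ≤ IF * IG := by linarith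
  exact goal

lemma a_zero {α : ℝ} (hα1 : α < 1) {a : ℕ → ℝ}
    (ha : ∀ i : ℕ, a i = ((i : ℝ) + 1) ^ (1 - α) - (i : ℝ) ^ (1 - α)) : a 0 = 1 := by
  have h0 : ((0:ℕ):ℝ) = 0 := by norm_num
  rw [ha 0, h0, Real.zero_rpow (show (1:ℝ) - α ≠ 0 by intro h; linarith), zero_add,
    Real.one_rpow]
  ring

lemma a_anti {α : ℝ} (hα0 : 0 < α) (hα1 : α < 1) {a : ℕ → ℝ}
    (ha : ∀ i : ℕ, a i = ((i : ℝ) + 1) ^ (1 - α) - (i : ℝ) ^ (1 - α)) (i : ℕ) :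
    a (i + 1) ≤ a i := by
  have hc := Real.concaveOn_rpow (p := 1 - α) (by linarith) (by linarith)
  have h := hc.2 (show (i : ℝ) ∈ Set.Ici (0:ℝ) from Set.mem_Ici.mpr (by positivity))
    (show (i : ℝ) + 2 ∈ Set.Ici (0:ℝ) from Set.mem_Ici.mpr (by positivity))
    (show (0:ℝ) ≤ 1/2 by norm_num) (show (0:ℝ) ≤ 1/2 by norm_num)
    (show (1/2 : ℝ) + 1/2 = 1 by norm_num)
  have hmid : (1/2 : ℝ) • (i : ℝ) + (1/2 : ℝ) • ((i : ℝ) + 2) = (i : ℝ) + 1 := by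
    simp; ring
  rw [hmid] at h
  simp only [smul_eq_mul] at h
  rw [ha i, ha (i + 1)]
  push_cast
  have h2 : (i:ℝ) + 1 + 1 = (i:ℝ) + 2 := by ring
  rw [h2]
  linarith

lemma p_nonneg {α : ℝ} (hα0 : 0 < α) (hα1 : α < 1) {a : ℕ → ℝ}
    (ha : ∀ i : ℕ, a i = ((i : ℝ) + 1) ^ (1 - α) - (i : ℝ) ^ (1 - α))
    {p : ℕ → ℝ} (hp0 : p 0 = 1)
    (hp : ∀ n : ℕ, 1 ≤ n → p n = ∑ j ∈ Finset.Icc 1 n, (a (j - 1) - a j) * p (n - j)) :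
    ∀ n : ℕ, 0 ≤ p n := by
  intro n
  induction n using Nat.strong_induction_on with
  | _ n ih =>
    rcases Nat.eq_zero_or_pos n with h0 | h1
    · rw [h0, hp0]; norm_num
    · rw [hp n h1]
      apply Finset.sum_nonneg
      intro j hj
      rw [Finset.mem_Icc] at hj
      have hj1 : 1 ≤ j := hj.1
      have : a j ≤ a (j - 1) := by
        have := a_anti hα0 hα1 ha (j - 1)
        rwa [Nat.sub_add_cancel hj1] at this
      have hpn : 0 ≤ p (n - j) := ih (n - j) (by omega)
      nlinarith

lemma conv_one {α : ℝ} (hα0 : 0 < α) (hα1 : α < 1) {a : ℕ → ℝ}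
    (ha : ∀ i : ℕ, a i = ((i : ℝ) + 1) ^ (1 - α) - (i : ℝ) ^ (1 - α))
    {p : ℕ → ℝ} (hp0 : p 0 = 1)
    (hp : ∀ n : ℕ, 1 ≤ n → p n = ∑ j ∈ Finset.Icc 1 n, (a (j - 1) - a j) * p (n - j)) :
    ∀ m : ℕ, ∑ k ∈ Finset.range (m + 1), a k * p (m - k) = 1 := by
  intro m
  induction m with
  | zero => simp [hp0, a_zero hα1 ha]
  | succ m ih =>
    rw [Finset.sum_range_succ']
    have hsplit : ∑ i ∈ Finset.range (m + 1), a (i + 1) * p (m + 1 - (i + 1)) =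
        ∑ i ∈ Finset.range (m + 1), a (i + 1) * p (m - i) := by
      apply Finset.sum_congr rfl
      intro i _
      congr 2
      omega
    rw [hsplit]
    simp only [Nat.sub_zero]
    have hpm : p (m + 1) = ∑ i ∈ Finset.range (m + 1), (a i - a (i + 1)) * p (m - i) := by
      rw [hp (m + 1) (by omega), ← Finset.Ico_add_one_right_eq_Icc, Finset.sum_Ico_eq_sum_range]
      apply Finset.sum_congr (by congr 1)
      intro i _
      have h1 : 1 + i - 1 = i := by omega
      have h2 : m + 1 - (1 + i) = m - i := by omega
      rw [h1, h2, Nat.add_comm 1 i]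
    rw [a_zero hα1 ha]
    have : (∑ i ∈ Finset.range (m + 1), (a i - a (i + 1)) * p (m - i)) +
        ∑ i ∈ Finset.range (m + 1), a (i + 1) * p (m - i) =
        ∑ i ∈ Finset.range (m + 1), a i * p (m - i) := by
      rw [← Finset.sum_add_distrib]
      apply Finset.sum_congr rfl
      intro i _
      ring
    calc (∑ i ∈ Finset.range (m + 1), a (i + 1) * p (m - i)) + 1 * p (m + 1)
        = (∑ i ∈ Finset.range (m + 1), (a i - a (i + 1)) * p (m - i)) +
          ∑ i ∈ Finset.range (m + 1), a (i + 1) * p (m - i) := by rw [← hpm]; ring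
      _ = ∑ i ∈ Finset.range (m + 1), a i * p (m - i) := this
      _ = 1 := ih

lemma rpow_anti {e x y : ℝ} (he : 0 ≤ e) (hx : 0 < x) (hxy : x ≤ y) : y ^ (-e) ≤ x ^ (-e) := by
  rw [Real.rpow_neg hx.le, Real.rpow_neg (hx.trans_le hxy).le]
  exact inv_anti₀ (Real.rpow_pos_of_pos hx e) (Real.rpow_le_rpow hx.le hxy he)

lemma Ebound {α : ℝ} (hα0 : 0 < α) (hα1 : α < 1) {a : ℕ → ℝ}
    (ha : ∀ i : ℕ, a i = ((i : ℝ) + 1) ^ (1 - α) - (i : ℝ) ^ (1 - α))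
    (j : ℕ) (hj : 1 ≤ j) :
    Real.Gamma (2 - α) * Real.Gamma (1 + α) ≤
      ∑ i ∈ Finset.range j, a i * (((j : ℝ) - i) ^ α - ((j : ℝ) - i - 1) ^ α) := by
  have hjR : (0:ℝ) < (j:ℝ) := by exact_mod_cast hj
  set F : ℝ → ℝ := fun u => u ^ (-α) with hF
  set G : ℝ → ℝ := fun u => ((j:ℝ) - u) ^ (α - 1) with hG
  have hFGint : IntervalIntegrable (fun u => F u * G u) volume 0 (j:ℝ) := by
    have := beta_intble (show (0:ℝ) < 1 - α by linarith) hα0 hjR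
    simpa [hF, hG, show (1:ℝ) - α - 1 = -α by ring] using this
  -- per-term inequality
  have hterm : ∀ i ∈ Finset.range j,
      α * (1 - α) * (∫ u in (i:ℝ)..((i:ℝ)+1), F u * G u) ≤
        a i * (((j : ℝ) - i) ^ α - ((j : ℝ) - i - 1) ^ α) := by
    intro i hi
    rw [Finset.mem_range] at hi
    have hij : (i:ℝ) + 1 ≤ (j:ℝ) := by exact_mod_cast hi
    have hi0 : (0:ℝ) ≤ (i:ℝ) := by positivity
    have hle : (i:ℝ) ≤ (i:ℝ) + 1 := by linarith
    -- integral representations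
    have key1 : a i = (1 - α) * ∫ u in (i:ℝ)..((i:ℝ)+1), F u := by
      rw [hF]
      rw [integral_rpow (Or.inl (by linarith : (-1:ℝ) < -α))]
      rw [ha i]
      have h1 : -α + 1 = 1 - α := by ring
      rw [h1]
      have hne : (1:ℝ) - α ≠ 0 := by linarith
      field_simp
    have key2 : ((j : ℝ) - i) ^ α - ((j : ℝ) - i - 1) ^ α =
        α * ∫ u in (i:ℝ)..((i:ℝ)+1), G u := by
      rw [hG]
      have hcomp : (∫ u in (i:ℝ)..((i:ℝ)+1), ((j:ℝ) - u) ^ (α - 1)) =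
          ∫ v in ((j:ℝ)-((i:ℝ)+1))..((j:ℝ)-(i:ℝ)), v ^ (α - 1) :=
        intervalIntegral.integral_comp_sub_left (fun v => v ^ (α - 1)) (j:ℝ)
      rw [hcomp, integral_rpow (Or.inl (by linarith : (-1:ℝ) < α - 1))]
      have h1 : α - 1 + 1 = α := by ring
      have h2 : (j:ℝ) - ((i:ℝ)+1) = (j:ℝ) - i - 1 := by ring
      rw [h1, h2]
      have hne : α ≠ 0 := ne_of_gt hα0
      field_simp
    -- integrability on Ioo
    have hsub : Set.uIcc (i:ℝ) ((i:ℝ)+1) ⊆ Set.uIcc (0:ℝ) (j:ℝ) := by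
      rw [Set.uIcc_of_le hle, Set.uIcc_of_le hjR.le]
      exact Set.Icc_subset_Icc hi0 hij
    have hFi : IntervalIntegrable F volume (i:ℝ) ((i:ℝ)+1) :=
      intervalIntegral.intervalIntegrable_rpow' (by linarith)
    have hGi : IntervalIntegrable G volume (i:ℝ) ((i:ℝ)+1) := by
      have base : IntervalIntegrable (fun v : ℝ => v ^ (α - 1)) volume
          ((j:ℝ)-(i:ℝ)) ((j:ℝ)-((i:ℝ)+1)) :=
        intervalIntegral.intervalIntegrable_rpow' (by linarith)
      have := base.comp_sub_left (j:ℝ)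
      rw [show (j:ℝ) - ((j:ℝ)-(i:ℝ)) = (i:ℝ) by ring,
        show (j:ℝ) - ((j:ℝ)-((i:ℝ)+1)) = (i:ℝ)+1 by ring] at this
      exact this
    have hFGi : IntervalIntegrable (fun u => F u * G u) volume (i:ℝ) ((i:ℝ)+1) :=
      hFGint.mono_set hsub
    have toIoo : ∀ {f : ℝ → ℝ}, (∫ u in (i:ℝ)..((i:ℝ)+1), f u) =
        ∫ u in Set.Ioo (i:ℝ) ((i:ℝ)+1), f u := by
      intro f
      rw [intervalIntegral.integral_of_le hle, MeasureTheory.integral_Ioc_eq_integral_Ioo]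
    have hFio : IntegrableOn F (Set.Ioo (i:ℝ) ((i:ℝ)+1)) :=
      ((intervalIntegrable_iff_integrableOn_Ioc_of_le hle).mp hFi).mono_set
        Set.Ioo_subset_Ioc_self
    have hGio : IntegrableOn G (Set.Ioo (i:ℝ) ((i:ℝ)+1)) :=
      ((intervalIntegrable_iff_integrableOn_Ioc_of_le hle).mp hGi).mono_set
        Set.Ioo_subset_Ioc_self
    have hFGio : IntegrableOn (fun u => F u * G u) (Set.Ioo (i:ℝ) ((i:ℝ)+1)) :=
      ((intervalIntegrable_iff_integrableOn_Ioc_of_le hle).mp hFGi).mono_set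
        Set.Ioo_subset_Ioc_self
    have hop : ∀ x ∈ Set.Ioo (i:ℝ) ((i:ℝ)+1), ∀ y ∈ Set.Ioo (i:ℝ) ((i:ℝ)+1),
        (F x - F y) * (G x - G y) ≤ 0 := by
      intro x hx y hy
      have hx0 : 0 < x := lt_of_le_of_lt hi0 hx.1
      have hy0 : 0 < y := lt_of_le_of_lt hi0 hy.1
      have hxj : x < (j:ℝ) := lt_of_lt_of_le hx.2 hij
      have hyj : y < (j:ℝ) := lt_of_lt_of_le hy.2 hij
      have hGrw : ∀ z : ℝ, G z = ((j:ℝ) - z) ^ (-(1 - α)) := by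
        intro z; rw [hG]; congr 1; ring
      rcases le_total x y with hxy | hxy
      · have h1 : F y ≤ F x := rpow_anti hα0.le hx0 hxy
        have h2 : G x ≤ G y := by
          rw [hGrw x, hGrw y]
          exact rpow_anti (by linarith) (by linarith) (by linarith)
        exact mul_nonpos_of_nonneg_of_nonpos (by linarith) (by linarith)
      · have h1 : F x ≤ F y := rpow_anti hα0.le hy0 hxy
        have h2 : G y ≤ G x := by
          rw [hGrw x, hGrw y]
          exact rpow_anti (by linarith) (by linarith) (by linarith)
        exact mul_nonpos_of_nonpos_of_nonneg (by linarith) (by linarith)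
    have hch := cheby hFio hGio hFGio hop
    rw [key1, key2]
    calc α * (1 - α) * (∫ u in (i:ℝ)..((i:ℝ)+1), F u * G u)
        = α * (1 - α) * ∫ u in Set.Ioo (i:ℝ) ((i:ℝ)+1), F u * G u := by rw [toIoo]
      _ ≤ α * (1 - α) * ((∫ u in Set.Ioo (i:ℝ) ((i:ℝ)+1), F u) *
            ∫ u in Set.Ioo (i:ℝ) ((i:ℝ)+1), G u) := by
          apply mul_le_mul_of_nonneg_left hch
          nlinarith
      _ = (1 - α) * (∫ u in (i:ℝ)..((i:ℝ)+1), F u) *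
            (α * ∫ u in (i:ℝ)..((i:ℝ)+1), G u) := by rw [toIoo, toIoo]; ring
  -- sum up
  have hsum : ∑ i ∈ Finset.range j, (∫ u in ((i:ℕ):ℝ)..(((i+1:ℕ)):ℝ), F u * G u) =
      ∫ u in ((0:ℕ):ℝ)..((j:ℕ):ℝ), F u * G u := by
    apply intervalIntegral.sum_integral_adjacent_intervals
    intro k hk
    apply hFGint.mono_set
    rw [Set.uIcc_of_le (by push_cast; linarith : ((k:ℕ):ℝ) ≤ ((k+1:ℕ):ℝ)),
      Set.uIcc_of_le hjR.le]
    apply Set.Icc_subset_Icc (by positivity)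
    exact_mod_cast hk
  have htotal : (∫ u in (0:ℝ)..(j:ℝ), F u * G u) = Real.Gamma (1 - α) * Real.Gamma α := by
    have := beta_eval (show (0:ℝ) < 1 - α by linarith) hα0 hjR
    rw [show (1:ℝ) - α - 1 = -α by ring] at this
    rw [hF, hG]
    simp only [this]
    rw [show (1:ℝ) - α + α = 1 by ring, show (1:ℝ) - 1 = 0 by ring]
    rw [Real.Gamma_one, Real.rpow_zero]
    ring
  have hconst : Real.Gamma (2 - α) * Real.Gamma (1 + α) =
      α * (1 - α) * (Real.Gamma (1 - α) * Real.Gamma α) := by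
    rw [show (2:ℝ) - α = (1 - α) + 1 by ring, show (1:ℝ) + α = α + 1 by ring]
    rw [Real.Gamma_add_one (by linarith : (1:ℝ) - α ≠ 0),
      Real.Gamma_add_one (by linarith : α ≠ 0)]
    ring
  calc Real.Gamma (2 - α) * Real.Gamma (1 + α)
      = α * (1 - α) * ∫ u in (0:ℝ)..(j:ℝ), F u * G u := by rw [htotal, hconst]
    _ = ∑ i ∈ Finset.range j, α * (1 - α) * (∫ u in ((i:ℕ):ℝ)..(((i+1:ℕ)):ℝ), F u * G u) := by
        rw [← Finset.mul_sum, hsum]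
        norm_num
    _ ≤ ∑ i ∈ Finset.range j, a i * (((j : ℝ) - i) ^ α - ((j : ℝ) - i - 1) ^ α) := by
        apply Finset.sum_le_sum
        intro i hi
        have := hterm i hi
        have hcast : (((i+1:ℕ)):ℝ) = (i:ℝ) + 1 := by push_cast; ring
        rw [hcast]
        exact this

lemma a_nonneg {α : ℝ} (hα1 : α < 1) {a : ℕ → ℝ}
    (ha : ∀ i : ℕ, a i = ((i : ℝ) + 1) ^ (1 - α) - (i : ℝ) ^ (1 - α)) (i : ℕ) : 0 ≤ a i := by
  rw [ha i]
  have := Real.rpow_le_rpow (x := (i:ℝ)) (y := (i:ℝ)+1) (by positivity) (by linarith)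
    (by linarith : (0:ℝ) ≤ 1 - α)
  linarith

lemma icc_to_range (M : ℕ) (g : ℕ → ℝ) :
    ∑ k ∈ Finset.Icc 1 M, g k = ∑ i ∈ Finset.range M, g (1 + i) := by
  rw [← Finset.Ico_add_one_right_eq_Icc, Finset.sum_Ico_eq_sum_range]
  congr 1

lemma tri_swap (M : ℕ) (f : ℕ → ℕ → ℝ) :
    ∑ j ∈ Finset.Icc 1 M, ∑ k ∈ Finset.Icc 1 j, f j k =
      ∑ k ∈ Finset.Icc 1 M, ∑ j ∈ Finset.Icc k M, f j k := by
  have h1 : ∀ j ∈ Finset.Icc 1 M, ∑ k ∈ Finset.Icc 1 j, f j k =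
      ∑ k ∈ Finset.Icc 1 M, if k ≤ j then f j k else 0 := by
    intro j hj
    rw [Finset.mem_Icc] at hj
    rw [← Finset.sum_filter]
    congr 1
    ext k
    simp only [Finset.mem_filter, Finset.mem_Icc]
    omega
  have h2 : ∀ k ∈ Finset.Icc 1 M, ∑ j ∈ Finset.Icc k M, f j k =
      ∑ j ∈ Finset.Icc 1 M, if k ≤ j then f j k else 0 := by
    intro k hk
    rw [Finset.mem_Icc] at hk
    rw [← Finset.sum_filter]
    congr 1
    ext j
    simp only [Finset.mem_filter, Finset.mem_Icc]
    omega
  rw [Finset.sum_congr rfl h1, Finset.sum_congr rfl h2, Finset.sum_comm]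

lemma Ebound' {α : ℝ} (hα0 : 0 < α) (hα1 : α < 1) {a : ℕ → ℝ}
    (ha : ∀ i : ℕ, a i = ((i : ℝ) + 1) ^ (1 - α) - (i : ℝ) ^ (1 - α))
    (j : ℕ) (hj : 1 ≤ j) :
    Real.Gamma (2 - α) * Real.Gamma (1 + α) ≤
      ∑ k ∈ Finset.Icc 1 j, a (j - k) * ((k : ℝ) ^ α - ((k : ℝ) - 1) ^ α) := by
  have key : ∑ k ∈ Finset.Icc 1 j, a (j - k) * ((k : ℝ) ^ α - ((k : ℝ) - 1) ^ α) =
      ∑ i ∈ Finset.range j, a i * (((j : ℝ) - i) ^ α - ((j : ℝ) - i - 1) ^ α) := by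
    rw [icc_to_range]
    rw [← Finset.sum_range_reflect]
    apply Finset.sum_congr rfl
    intro i hi
    rw [Finset.mem_range] at hi
    have e1 : 1 + (j - 1 - i) = j - i := by omega
    have e2 : j - (j - i) = i := by omega
    rw [e1, e2]
    have e3 : ((j - i : ℕ) : ℝ) = (j : ℝ) - i := by
      have : i ≤ j := by omega
      push_cast [this]
      ring
    rw [e3]
  rw [key]
  exact Ebound hα0 hα1 ha j hj

lemma Tbound {α : ℝ} (hα0 : 0 < α) (hα1 : α < 1) {a : ℕ → ℝ}
    (ha : ∀ i : ℕ, a i = ((i : ℝ) + 1) ^ (1 - α) - (i : ℝ) ^ (1 - α))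
    {p : ℕ → ℝ} (hp0 : p 0 = 1)
    (hp : ∀ n : ℕ, 1 ≤ n → p n = ∑ j ∈ Finset.Icc 1 n, (a (j - 1) - a j) * p (n - j))
    (M : ℕ) :
    Real.Gamma (2 - α) * Real.Gamma (1 + α) * ∑ k ∈ Finset.Icc 1 M, p k ≤ (M : ℝ) ^ α := by
  set c1 := Real.Gamma (2 - α) * Real.Gamma (1 + α) with hc1
  have hpn := p_nonneg hα0 hα1 ha hp0 hp
  have han := a_nonneg hα1 ha
  have hd : ∀ k : ℕ, 1 ≤ k → 0 ≤ (k : ℝ) ^ α - ((k : ℝ) - 1) ^ α := by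
    intro k hk
    have h1 : (1:ℝ) ≤ (k:ℝ) := by exact_mod_cast hk
    have := Real.rpow_le_rpow (x := (k:ℝ) - 1) (y := (k:ℝ)) (by linarith) (by linarith) hα0.le
    linarith
  -- reflection of the p-sum
  have refl1 : ∑ k ∈ Finset.Icc 1 M, p k = ∑ j ∈ Finset.Icc 1 M, p (M + 1 - j) := by
    rw [icc_to_range, icc_to_range, ← Finset.sum_range_reflect]
    apply Finset.sum_congr rfl
    intro i hi
    rw [Finset.mem_range] at hi
    congr 1
    omega
  -- telescoping sum of d
  have tele : ∑ k ∈ Finset.Icc 1 M, ((k : ℝ) ^ α - ((k : ℝ) - 1) ^ α) = (M : ℝ) ^ α := by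
    rw [icc_to_range]
    have : ∀ i, ((1 + i : ℕ) : ℝ) ^ α - (((1 + i : ℕ) : ℝ) - 1) ^ α =
        (((i + 1 : ℕ)) : ℝ) ^ α - ((i : ℕ) : ℝ) ^ α := by
      intro i
      push_cast
      ring_nf
    rw [Finset.sum_congr rfl fun i _ => this i, Finset.sum_range_sub (fun i => ((i : ℕ) : ℝ) ^ α)]
    norm_num
    exact Real.zero_rpow (ne_of_gt hα0)
  -- the inner convolution bound
  have inner_le : ∀ k ∈ Finset.Icc 1 M,
      ∑ j ∈ Finset.Icc k M, a (j - k) * p (M + 1 - j) ≤ 1 := by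
    intro k hk
    rw [Finset.mem_Icc] at hk
    have hconv := conv_one hα0 hα1 ha hp0 hp (M + 1 - k)
    have step : ∑ j ∈ Finset.Icc k M, a (j - k) * p (M + 1 - j) =
        ∑ i ∈ Finset.range (M + 1 - k), a i * p (M + 1 - k - i) := by
      rw [← Finset.Ico_add_one_right_eq_Icc, Finset.sum_Ico_eq_sum_range]
      apply Finset.sum_congr rfl
      intro i hi
      have e1 : k + i - k = i := by omega
      have e2 : M + 1 - (k + i) = M + 1 - k - i := by omega
      rw [e1, e2]
    rw [step]
    calc ∑ i ∈ Finset.range (M + 1 - k), a i * p (M + 1 - k - i)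
        ≤ ∑ i ∈ Finset.range (M + 1 - k + 1), a i * p (M + 1 - k - i) := by
          apply Finset.sum_le_sum_of_subset_of_nonneg
          · exact Finset.range_subset_range.mpr (by omega)
          · intro i _ _
            exact mul_nonneg (han i) (hpn _)
      _ = 1 := hconv
  -- main chain
  calc c1 * ∑ k ∈ Finset.Icc 1 M, p k
      = ∑ j ∈ Finset.Icc 1 M, c1 * p (M + 1 - j) := by rw [refl1, Finset.mul_sum]
    _ ≤ ∑ j ∈ Finset.Icc 1 M,
          (∑ k ∈ Finset.Icc 1 j, a (j - k) * ((k : ℝ) ^ α - ((k : ℝ) - 1) ^ α)) *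
            p (M + 1 - j) := by
        apply Finset.sum_le_sum
        intro j hj
        rw [Finset.mem_Icc] at hj
        exact mul_le_mul_of_nonneg_right (Ebound' hα0 hα1 ha j hj.1) (hpn _)
    _ = ∑ j ∈ Finset.Icc 1 M, ∑ k ∈ Finset.Icc 1 j,
          (a (j - k) * ((k : ℝ) ^ α - ((k : ℝ) - 1) ^ α)) * p (M + 1 - j) := by
        apply Finset.sum_congr rfl
        intro j _
        rw [Finset.sum_mul]
    _ = ∑ k ∈ Finset.Icc 1 M, ∑ j ∈ Finset.Icc k M,
          (a (j - k) * ((k : ℝ) ^ α - ((k : ℝ) - 1) ^ α)) * p (M + 1 - j) :=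
        tri_swap M _
    _ = ∑ k ∈ Finset.Icc 1 M, ((k : ℝ) ^ α - ((k : ℝ) - 1) ^ α) *
          ∑ j ∈ Finset.Icc k M, a (j - k) * p (M + 1 - j) := by
        apply Finset.sum_congr rfl
        intro k _
        rw [Finset.mul_sum]
        apply Finset.sum_congr rfl
        intro j _
        ring
    _ ≤ ∑ k ∈ Finset.Icc 1 M, ((k : ℝ) ^ α - ((k : ℝ) - 1) ^ α) * 1 := by
        apply Finset.sum_le_sum
        intro k hk
        have hk' := hk
        rw [Finset.mem_Icc] at hk'
        exact mul_le_mul_of_nonneg_left (inner_le k hk) (hd k hk'.1)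
    _ = (M : ℝ) ^ α := by
        simp only [mul_one]
        exact tele

lemma tele_pow {c : ℝ} (hc : c ≠ 0) (M : ℕ) :
    ∑ k ∈ Finset.Icc 1 M, ((k : ℝ) ^ c - ((k : ℝ) - 1) ^ c) = (M : ℝ) ^ c := by
  rw [icc_to_range]
  have h : ∀ i : ℕ, ((1 + i : ℕ) : ℝ) ^ c - (((1 + i : ℕ) : ℝ) - 1) ^ c =
      ((i + 1 : ℕ) : ℝ) ^ c - ((i : ℕ) : ℝ) ^ c := by
    intro i; push_cast; ring_nf
  rw [Finset.sum_congr rfl fun i _ => h i, Finset.sum_range_sub (fun i => ((i : ℕ) : ℝ) ^ c)]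
  norm_num
  exact Real.zero_rpow hc

theorem stmt_4 (α : ℝ) (hα0 : 0 < α) (hα1 : α < 1)
    (a : ℕ → ℝ) (ha : ∀ i : ℕ, a i = ((i : ℝ) + 1) ^ (1 - α) - (i : ℝ) ^ (1 - α))
    (p : ℕ → ℝ) (hp0 : p 0 = 1)
    (hp : ∀ n : ℕ, 1 ≤ n → p n = ∑ j ∈ Finset.Icc 1 n, (a (j - 1) - a j) * p (n - j)) :
    ∀ m : ℕ, 1 ≤ m → ∀ n : ℕ, 1 ≤ n →
      (Real.Gamma (2 - α) / Real.Gamma (1 + ((m : ℝ) - 1) * α)) *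
          ∑ j ∈ Finset.Icc 1 (n - 1), p (n - j) * (j : ℝ) ^ (((m : ℝ) - 1) * α)
        ≤ (n : ℝ) ^ ((m : ℝ) * α) / Real.Gamma (1 + (m : ℝ) * α) := by
  intro m hm n hn
  have hpn := p_nonneg hα0 hα1 ha hp0 hp
  have hΓ2α : 0 < Real.Gamma (2 - α) := Real.Gamma_pos_of_pos (by linarith)
  have hΓ1α : 0 < Real.Gamma (1 + α) := Real.Gamma_pos_of_pos (by linarith)
  have hnR : (0:ℝ) < (n:ℝ) := by exact_mod_cast hn
  -- reflection of the sum of p over Icc 1 (n-1)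
  have refl2 : ∑ j ∈ Finset.Icc 1 (n-1), p (n - j) = ∑ k ∈ Finset.Icc 1 (n-1), p k := by
    rw [icc_to_range (n-1) (fun j => p (n - j)), icc_to_range (n-1) p,
      ← Finset.sum_range_reflect (fun i => p (1 + i)) (n-1)]
    apply Finset.sum_congr rfl
    intro i hi
    rw [Finset.mem_range] at hi
    congr 1
    omega
  rcases eq_or_lt_of_le hm with rfl | hm2
  · -- m = 1
    simp only [Nat.cast_one, sub_self, zero_mul, Real.rpow_zero, mul_one, add_zero,
      Real.Gamma_one, div_one, one_mul]
    rw [refl2, le_div_iff₀ hΓ1α]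
    calc Real.Gamma (2 - α) * (∑ k ∈ Finset.Icc 1 (n-1), p k) * Real.Gamma (1 + α)
        = Real.Gamma (2 - α) * Real.Gamma (1 + α) * ∑ k ∈ Finset.Icc 1 (n-1), p k := by ring
      _ ≤ ((n - 1 : ℕ) : ℝ) ^ α := Tbound hα0 hα1 ha hp0 hp (n - 1)
      _ ≤ (n : ℝ) ^ α := by
          apply Real.rpow_le_rpow (by positivity) _ hα0.le
          exact_mod_cast Nat.sub_le n 1
  · -- m ≥ 2
    have hm2' : 2 ≤ m := hm2
    set β := ((m : ℝ) - 1) * α with hβ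
    have hmR : (2 : ℝ) ≤ (m : ℝ) := by exact_mod_cast hm2'
    have hβpos : 0 < β := mul_pos (by linarith) hα0
    have hγ : (m : ℝ) * α = β + α := by rw [hβ]; ring
    rw [hγ]
    have hΓ1β : 0 < Real.Gamma (1 + β) := Real.Gamma_pos_of_pos (by linarith)
    have hΓ1γ : 0 < Real.Gamma (1 + (β + α)) := Real.Gamma_pos_of_pos (by linarith)
    have hΓβα1 : 0 < Real.Gamma (β + α + 1) := Real.Gamma_pos_of_pos (by linarith)
    -- global integrability of the beta integrand for (β, α+1)
    have hint : IntervalIntegrable (fun s => s ^ (β - 1) * ((n:ℝ) - s) ^ α) volume 0 (n:ℝ) := by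
      have := beta_intble hβpos (show (0:ℝ) < α + 1 by linarith) hnR
      simp only [show α + 1 - 1 = α by ring] at this
      exact this
    have hδ : ∀ k : ℕ, 1 ≤ k → 0 ≤ (k:ℝ) ^ β - ((k:ℝ) - 1) ^ β := by
      intro k hk
      have h1 : (1:ℝ) ≤ (k:ℝ) := by exact_mod_cast hk
      have := Real.rpow_le_rpow (x := (k:ℝ) - 1) (y := (k:ℝ)) (by linarith) (by linarith) hβpos.le
      linarith
    set N := n - 1 with hN
    -- Abel summation / swap
    have main1 : ∑ j ∈ Finset.Icc 1 N, p (n - j) * (j:ℝ) ^ β =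
        ∑ k ∈ Finset.Icc 1 N, ((k:ℝ) ^ β - ((k:ℝ) - 1) ^ β) * ∑ j ∈ Finset.Icc k N, p (n - j) := by
      calc ∑ j ∈ Finset.Icc 1 N, p (n - j) * (j:ℝ) ^ β
          = ∑ j ∈ Finset.Icc 1 N, ∑ k ∈ Finset.Icc 1 j,
              p (n - j) * ((k:ℝ) ^ β - ((k:ℝ) - 1) ^ β) := by
            apply Finset.sum_congr rfl
            intro j hj
            rw [← Finset.mul_sum, tele_pow hβpos.ne' j]
        _ = ∑ k ∈ Finset.Icc 1 N, ∑ j ∈ Finset.Icc k N,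
              p (n - j) * ((k:ℝ) ^ β - ((k:ℝ) - 1) ^ β) := tri_swap N _
        _ = ∑ k ∈ Finset.Icc 1 N, ((k:ℝ) ^ β - ((k:ℝ) - 1) ^ β) *
              ∑ j ∈ Finset.Icc k N, p (n - j) := by
            apply Finset.sum_congr rfl
            intro k _
            rw [Finset.mul_sum]
            apply Finset.sum_congr rfl
            intro j _
            ring
    -- inner sums are partial sums of p
    have Tsum : ∀ k ∈ Finset.Icc 1 N, ∑ j ∈ Finset.Icc k N, p (n - j) =
        ∑ i ∈ Finset.Icc 1 (n - k), p i := by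
      intro k hk
      obtain ⟨hk1, hkN⟩ := Finset.mem_Icc.mp hk
      rw [← Finset.Ico_add_one_right_eq_Icc, Finset.sum_Ico_eq_sum_range,
        icc_to_range (n - k) p, ← Finset.sum_range_reflect (fun i => p (1 + i)) (n - k)]
      apply Finset.sum_congr (by congr 1; omega)
      intro i hi
      rw [Finset.mem_range] at hi
      congr 1
      omega
    -- key bound using Tbound
    have key : Real.Gamma (2 - α) * Real.Gamma (1 + α) *
        ∑ j ∈ Finset.Icc 1 N, p (n - j) * (j:ℝ) ^ β ≤
        ∑ k ∈ Finset.Icc 1 N, ((k:ℝ) ^ β - ((k:ℝ) - 1) ^ β) * ((n:ℝ) - (k:ℝ)) ^ α := by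
      rw [main1, Finset.mul_sum]
      apply Finset.sum_le_sum
      intro k hk
      obtain ⟨hk1, hkN⟩ := Finset.mem_Icc.mp hk
      have hkn : k ≤ n := by omega
      have hcast : ((n - k : ℕ) : ℝ) = (n:ℝ) - (k:ℝ) := by
        push_cast [hkn]
        ring
      calc Real.Gamma (2 - α) * Real.Gamma (1 + α) *
            (((k:ℝ) ^ β - ((k:ℝ) - 1) ^ β) * ∑ j ∈ Finset.Icc k N, p (n - j))
          = ((k:ℝ) ^ β - ((k:ℝ) - 1) ^ β) *
              (Real.Gamma (2 - α) * Real.Gamma (1 + α) * ∑ i ∈ Finset.Icc 1 (n - k), p i) := by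
            rw [Tsum k hk]; ring
        _ ≤ ((k:ℝ) ^ β - ((k:ℝ) - 1) ^ β) * ((n - k : ℕ) : ℝ) ^ α :=
            mul_le_mul_of_nonneg_left (Tbound hα0 hα1 ha hp0 hp (n - k)) (hδ k hk1)
        _ = ((k:ℝ) ^ β - ((k:ℝ) - 1) ^ β) * ((n:ℝ) - (k:ℝ)) ^ α := by rw [hcast]
    -- comparison with the beta integral
    have intcomp : ∑ k ∈ Finset.Icc 1 N, ((k:ℝ) ^ β - ((k:ℝ) - 1) ^ β) * ((n:ℝ) - (k:ℝ)) ^ α ≤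
        β * ∫ s in (0:ℝ)..(n:ℝ), s ^ (β - 1) * ((n:ℝ) - s) ^ α := by
      have hNn : (N:ℝ) ≤ (n:ℝ) := by exact_mod_cast Nat.sub_le n 1
      have per : ∀ k ∈ Finset.Icc 1 N, ((k:ℝ) ^ β - ((k:ℝ) - 1) ^ β) * ((n:ℝ) - (k:ℝ)) ^ α ≤
          β * ∫ s in ((k:ℝ) - 1)..(k:ℝ), s ^ (β - 1) * ((n:ℝ) - s) ^ α := by
        intro k hk
        obtain ⟨hk1, hkN⟩ := Finset.mem_Icc.mp hk
        have hk1R : (1:ℝ) ≤ (k:ℝ) := by exact_mod_cast hk1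
        have hkn' : (k:ℝ) ≤ (n:ℝ) := by
          have : k ≤ n := by omega
          exact_mod_cast this
        have hab : (k:ℝ) - 1 ≤ (k:ℝ) := by linarith
        have hδint : (k:ℝ) ^ β - ((k:ℝ) - 1) ^ β =
            β * ∫ s in ((k:ℝ) - 1)..(k:ℝ), s ^ (β - 1) := by
          rw [integral_rpow (Or.inl (by linarith : (-1:ℝ) < β - 1))]
          rw [show β - 1 + 1 = β by ring]
          field_simp
        have hmono : (∫ s in ((k:ℝ) - 1)..(k:ℝ), s ^ (β - 1) * ((n:ℝ) - (k:ℝ)) ^ α) ≤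
            ∫ s in ((k:ℝ) - 1)..(k:ℝ), s ^ (β - 1) * ((n:ℝ) - s) ^ α := by
          apply intervalIntegral.integral_mono_on hab
          · exact (intervalIntegral.intervalIntegrable_rpow' (by linarith)).mul_const _
          · apply hint.mono_set
            rw [Set.uIcc_of_le hab, Set.uIcc_of_le hnR.le]
            exact Set.Icc_subset_Icc (by linarith) (by linarith)
          · intro s hs
            have hs0 : 0 ≤ s := by
              have := hs.1
              linarith
            apply mul_le_mul_of_nonneg_left _ (Real.rpow_nonneg hs0 _)
            exact Real.rpow_le_rpow (by linarith) (by linarith [hs.2]) hα0.le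
        calc ((k:ℝ) ^ β - ((k:ℝ) - 1) ^ β) * ((n:ℝ) - (k:ℝ)) ^ α
            = β * ∫ s in ((k:ℝ) - 1)..(k:ℝ), s ^ (β - 1) * ((n:ℝ) - (k:ℝ)) ^ α := by
              rw [intervalIntegral.integral_mul_const, hδint]; ring
          _ ≤ β * ∫ s in ((k:ℝ) - 1)..(k:ℝ), s ^ (β - 1) * ((n:ℝ) - s) ^ α :=
              mul_le_mul_of_nonneg_left hmono hβpos.le
      have sum_int : ∑ k ∈ Finset.Icc 1 N,
          (∫ s in ((k:ℝ) - 1)..(k:ℝ), s ^ (β - 1) * ((n:ℝ) - s) ^ α) =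
          ∫ s in (0:ℝ)..(N:ℝ), s ^ (β - 1) * ((n:ℝ) - s) ^ α := by
        rw [icc_to_range N (fun k => ∫ s in ((k:ℝ) - 1)..(k:ℝ), s ^ (β - 1) * ((n:ℝ) - s) ^ α)]
        have step : ∀ i ∈ Finset.range N,
            (∫ s in (((1 + i : ℕ):ℝ) - 1)..((1 + i : ℕ):ℝ), s ^ (β - 1) * ((n:ℝ) - s) ^ α) =
            ∫ s in ((i:ℕ):ℝ)..(((i + 1:ℕ)):ℝ), s ^ (β - 1) * ((n:ℝ) - s) ^ α := by
          intro i _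
          congr 1 <;> push_cast <;> ring
        rw [Finset.sum_congr rfl step]
        have adj : ∀ i : ℕ, i < N → IntervalIntegrable
            (fun s => s ^ (β - 1) * ((n:ℝ) - s) ^ α) volume ((i:ℕ):ℝ) (((i + 1:ℕ)):ℝ) := by
          intro i hi
          apply hint.mono_set
          have h1 : ((i:ℕ):ℝ) ≤ (((i + 1:ℕ)):ℝ) := by push_cast; linarith
          rw [Set.uIcc_of_le h1, Set.uIcc_of_le hnR.le]
          apply Set.Icc_subset_Icc (by positivity)
          have : i + 1 ≤ n := by omega
          exact_mod_cast this
        have := intervalIntegral.sum_integral_adjacent_intervals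
          (a := fun i : ℕ => (i:ℝ)) (n := N) adj
        simpa using this
      have ext : (∫ s in (0:ℝ)..(N:ℝ), s ^ (β - 1) * ((n:ℝ) - s) ^ α) ≤
          ∫ s in (0:ℝ)..(n:ℝ), s ^ (β - 1) * ((n:ℝ) - s) ^ α := by
        have hN0 : (0:ℝ) ≤ (N:ℝ) := by positivity
        have i1 : IntervalIntegrable (fun s => s ^ (β - 1) * ((n:ℝ) - s) ^ α) volume 0 (N:ℝ) := by
          apply hint.mono_set
          rw [Set.uIcc_of_le hN0, Set.uIcc_of_le hnR.le]
          exact Set.Icc_subset_Icc le_rfl hNn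
        have i2 : IntervalIntegrable (fun s => s ^ (β - 1) * ((n:ℝ) - s) ^ α) volume (N:ℝ) (n:ℝ) := by
          apply hint.mono_set
          rw [Set.uIcc_of_le hNn, Set.uIcc_of_le hnR.le]
          exact Set.Icc_subset_Icc hN0 le_rfl
        have hsplit := intervalIntegral.integral_add_adjacent_intervals i1 i2
        have hnn : 0 ≤ ∫ s in (N:ℝ)..(n:ℝ), s ^ (β - 1) * ((n:ℝ) - s) ^ α := by
          apply intervalIntegral.integral_nonneg hNn
          intro s hs
          have hs0 : 0 ≤ s := le_trans hN0 hs.1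
          exact mul_nonneg (Real.rpow_nonneg hs0 _) (Real.rpow_nonneg (by linarith [hs.2]) _)
        linarith
      calc ∑ k ∈ Finset.Icc 1 N, ((k:ℝ) ^ β - ((k:ℝ) - 1) ^ β) * ((n:ℝ) - (k:ℝ)) ^ α
          ≤ ∑ k ∈ Finset.Icc 1 N,
              β * ∫ s in ((k:ℝ) - 1)..(k:ℝ), s ^ (β - 1) * ((n:ℝ) - s) ^ α :=
            Finset.sum_le_sum per
        _ = β * ∫ s in (0:ℝ)..(N:ℝ), s ^ (β - 1) * ((n:ℝ) - s) ^ α := by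
            rw [← Finset.mul_sum, sum_int]
        _ ≤ β * ∫ s in (0:ℝ)..(n:ℝ), s ^ (β - 1) * ((n:ℝ) - s) ^ α :=
            mul_le_mul_of_nonneg_left ext hβpos.le
    -- evaluation of the beta integral
    have ieval : (∫ s in (0:ℝ)..(n:ℝ), s ^ (β - 1) * ((n:ℝ) - s) ^ α) =
        Real.Gamma β * Real.Gamma (α + 1) / Real.Gamma (β + α + 1) * (n:ℝ) ^ (β + α) := by
      have := beta_eval hβpos (show (0:ℝ) < α + 1 by linarith) hnR
      simp only [show α + 1 - 1 = α by ring, show β + (α + 1) - 1 = β + α by ring, show β + α + 1 - 1 = β + α by ring,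
        show β + (α + 1) = β + α + 1 by ring] at this
      exact this
    -- put everything together
    have key2 : Real.Gamma (2 - α) * Real.Gamma (1 + α) *
        (∑ j ∈ Finset.Icc 1 N, p (n - j) * (j:ℝ) ^ β) ≤
        β * (Real.Gamma β * Real.Gamma (α + 1) / Real.Gamma (β + α + 1) * (n:ℝ) ^ (β + α)) := by
      rw [← ieval]
      exact le_trans key intcomp
    have hβΓ : β * Real.Gamma β = Real.Gamma (β + 1) := (Real.Gamma_add_one hβpos.ne').symm
    have e2 : Real.Gamma (1 + β) = Real.Gamma (β + 1) := by rw [add_comm]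
    have e3 : Real.Gamma (1 + α) = Real.Gamma (α + 1) := by rw [add_comm]
    have e4 : Real.Gamma (1 + (β + α)) = Real.Gamma (β + α + 1) := by rw [add_comm]
    rw [div_mul_eq_mul_div, div_le_div_iff₀ hΓ1β hΓ1γ, e4, e2]
    -- goal : Γ(2-α) * Σ * Γ(β+α+1) ≤ n^(β+α) * Γ(β+1)
    have key3 : Real.Gamma (2 - α) * Real.Gamma (1 + α) *
        (∑ j ∈ Finset.Icc 1 N, p (n - j) * (j:ℝ) ^ β) * Real.Gamma (β + α + 1) ≤
        Real.Gamma (β + 1) * Real.Gamma (α + 1) * (n:ℝ) ^ (β + α) := by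
      have h := mul_le_mul_of_nonneg_right key2 hΓβα1.le
      calc Real.Gamma (2 - α) * Real.Gamma (1 + α) *
            (∑ j ∈ Finset.Icc 1 N, p (n - j) * (j:ℝ) ^ β) * Real.Gamma (β + α + 1)
          = Real.Gamma (2 - α) * Real.Gamma (1 + α) *
            (∑ j ∈ Finset.Icc 1 N, p (n - j) * (j:ℝ) ^ β) * Real.Gamma (β + α + 1) := rfl
        _ ≤ β * (Real.Gamma β * Real.Gamma (α + 1) / Real.Gamma (β + α + 1) * (n:ℝ) ^ (β + α)) *
            Real.Gamma (β + α + 1) := h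
        _ = (β * Real.Gamma β) * Real.Gamma (α + 1) * (n:ℝ) ^ (β + α) := by
            field_simp
        _ = Real.Gamma (β + 1) * Real.Gamma (α + 1) * (n:ℝ) ^ (β + α) := by rw [hβΓ]
    have hΓα1 : 0 < Real.Gamma (α + 1) := Real.Gamma_pos_of_pos (by linarith)
    have key4 : Real.Gamma (α + 1) *
        (Real.Gamma (2 - α) * (∑ j ∈ Finset.Icc 1 N, p (n - j) * (j:ℝ) ^ β) *
          Real.Gamma (β + α + 1)) ≤
        Real.Gamma (α + 1) * ((n:ℝ) ^ (β + α) * Real.Gamma (β + 1)) := by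
      calc Real.Gamma (α + 1) *
            (Real.Gamma (2 - α) * (∑ j ∈ Finset.Icc 1 N, p (n - j) * (j:ℝ) ^ β) *
              Real.Gamma (β + α + 1))
          = Real.Gamma (2 - α) * Real.Gamma (1 + α) *
            (∑ j ∈ Finset.Icc 1 N, p (n - j) * (j:ℝ) ^ β) * Real.Gamma (β + α + 1) := by
            rw [e3]; ring
        _ ≤ Real.Gamma (β + 1) * Real.Gamma (α + 1) * (n:ℝ) ^ (β + α) := key3
        _ = Real.Gamma (α + 1) * ((n:ℝ) ^ (β + α) * Real.Gamma (β + 1)) := by ring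
    exact le_of_mul_le_mul_left key4 hΓα1
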